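/- In a triangle, the squares of the sidelengths α², β², γ² are in arithmetic progression (2β² = α² + γ²) if and only if cot A, cot B, cot Γ are in arithmetic progression (2·cot B = cot A + cot Γ). -/

import Mathlib

private lemma sin_sq_eq' (X : ℝ) : Real.sin X ^ 2 = 1 - Real.cos X ^ 2 := by
  have := Real.sin_sq_add_cos_sq X; linarith

set_option maxHeartbeats 1000000 in
theorem squares_AP_iff_cot_AP (A B Γ α β γ : ℝ)
    (hA : 0 < A) (hA' : A < Real.pi) (hB : 0 < B) (hB' : B < Real.pi)
    (hΓ : 0 < Γ) (hΓ' : Γ < Real.pi) (hsum : A + B + Γ = Real.pi)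
    (hα : 0 < α) (hβ : 0 < β) (hγ : 0 < γ)
    (hcosA : Real.cos A = (β ^ 2 + γ ^ 2 - α ^ 2) / (2 * β * γ))
    (hcosB : Real.cos B = (α ^ 2 + γ ^ 2 - β ^ 2) / (2 * α * γ))
    (hcosΓ : Real.cos Γ = (α ^ 2 + β ^ 2 - γ ^ 2) / (2 * α * β)) :
    2 * β ^ 2 = α ^ 2 + γ ^ 2 ↔
      2 * Real.cot B = Real.cot A + Real.cot Γ := by
  set Q : ℝ := 2*α^2*β^2 + 2*β^2*γ^2 + 2*γ^2*α^2 - α^4 - β^4 - γ^4 with hQ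
  have hsinA : 0 < Real.sin A := Real.sin_pos_of_pos_of_lt_pi hA hA'
  have hsinB : 0 < Real.sin B := Real.sin_pos_of_pos_of_lt_pi hB hB'
  have hsinΓ : 0 < Real.sin Γ := Real.sin_pos_of_pos_of_lt_pi hΓ hΓ'
  have hsA2 : Real.sin A ^ 2 = Q / (2 * β * γ) ^ 2 := by
    rw [sin_sq_eq', hcosA]; field_simp; ring
  have hsB2 : Real.sin B ^ 2 = Q / (2 * α * γ) ^ 2 := by
    rw [sin_sq_eq', hcosB]; field_simp; ring
  have hsΓ2 : Real.sin Γ ^ 2 = Q / (2 * α * β) ^ 2 := by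
    rw [sin_sq_eq', hcosΓ]; field_simp; ring
  have hQpos : 0 < Q := by
    have h1 : 0 < Real.sin A ^ 2 := pow_pos hsinA 2
    rw [hsA2] at h1
    have h2 : (0:ℝ) < (2 * β * γ) ^ 2 := by positivity
    exact (div_pos_iff.mp h1).elim (fun h => h.1) (fun h => absurd h.2 (not_lt.mpr h2.le))
  have hsQ : 0 < Real.sqrt Q := Real.sqrt_pos.mpr hQpos
  have key : ∀ X y z : ℝ, 0 < Real.sin X → 0 < y → 0 < z →
      Real.sin X ^ 2 = Q / (2 * y * z) ^ 2 → Real.sin X = Real.sqrt Q / (2 * y * z) := by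
    intro X y z hs hy hz h2
    have hyz : (0:ℝ) < 2 * y * z := by positivity
    have : Real.sin X = Real.sqrt (Q / (2 * y * z) ^ 2) := by
      rw [← h2, Real.sqrt_sq hs.le]
    rw [this, Real.sqrt_div hQpos.le, Real.sqrt_sq hyz.le]
  have hsA := key A β γ hsinA hβ hγ hsA2
  have hsB := key B α γ hsinB hα hγ hsB2
  have hsΓ := key Γ α β hsinΓ hα hβ hsΓ2
  have hcotA : Real.cot A = (β ^ 2 + γ ^ 2 - α ^ 2) / Real.sqrt Q := by
    rw [Real.cot_eq_cos_div_sin, hcosA, hsA]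
    field_simp
  have hcotB : Real.cot B = (α ^ 2 + γ ^ 2 - β ^ 2) / Real.sqrt Q := by
    rw [Real.cot_eq_cos_div_sin, hcosB, hsB]
    field_simp
  have hcotΓ : Real.cot Γ = (α ^ 2 + β ^ 2 - γ ^ 2) / Real.sqrt Q := by
    rw [Real.cot_eq_cos_div_sin, hcosΓ, hsΓ]
    field_simp
  rw [hcotA, hcotB, hcotΓ]
  rw [← add_div, ← mul_div_assoc]
  rw [div_eq_div_iff hsQ.ne' hsQ.ne']
  constructor <;> intro h <;> nlinarith [hsQ, sq_nonneg (Real.sqrt Q)]
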